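/- Let 𝓜 be a finite set of even cardinality M = 2n, ψ : 𝓜 → 𝓜 an involution, and let I, I' ⊆ {1,…,M} be disjoint sets, each of size k, such that no j ∈ I ∪ I' satisfies M+1−j ∈ I ∪ I'. Let y, y' ∈ 𝓜 with ψ(y) ≠ y, ψ(y') ≠ y', y' ≠ y and y' ≠ ψ(y). Then the number of vectors x ∈ X_ψ such that {j : x_j = y} = I and {j : x_j = y'} = I' equals (M−4)^(n−2k). -/

import Mathlib

open Finset

/-- The set of ψ-symmetric vectors of length `M`: vectors `x` with
`x (M+1-j) = ψ (x j)` for all `j` (0-indexed: `x j.rev = ψ (x j)`). -/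
def Xpsi (α : Type*) [Fintype α] [DecidableEq α] (M : ℕ) (ψ : α → α) :
    Finset (Fin M → α) :=
  Finset.univ.filter fun x => ∀ j : Fin M, x j.rev = ψ (x j)

/-- The number of occurrences of `y` among the components of `x`. -/
def occCount {α : Type*} {M : ℕ} [DecidableEq α] (x : Fin M → α) (y : α) : ℕ :=
  (Finset.univ.filter fun j => x j = y).card

/-- `mCount x k` is the number of elements occurring exactly `k` times among
the components of `x`. -/
def mCount {α : Type*} {M : ℕ} [Fintype α] [DecidableEq α] (x : Fin M → α) (k : ℕ) : ℕ :=
  (Finset.univ.filter fun y => occCount x y = k).card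

/-- The set of fixed points of `ψ`. -/
def fixPts (α : Type*) [Fintype α] [DecidableEq α] (ψ : α → α) : Finset α :=
  Finset.univ.filter fun y => ψ y = y

namespace St7

def emb {n : ℕ} (i : Fin n) : Fin (2*n) := ⟨i.val, by have := i.isLt; omega⟩

def pr {n : ℕ} (j : Fin (2*n)) : Fin n :=
  if h : j.val < n then ⟨j.val, h⟩ else ⟨2*n - 1 - j.val, by have := j.isLt; omega⟩

def unf {α : Type*} {n : ℕ} (ψ : α → α) (g : Fin n → α) (j : Fin (2*n)) : α :=
  if h : j.val < n then g ⟨j.val, h⟩ else ψ (g ⟨2*n - 1 - j.val, by have := j.isLt; omega⟩)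

lemma pr_emb {n : ℕ} (i : Fin n) : pr (emb i) = i := by
  simp [pr, emb, i.isLt]

lemma pr_rev_emb {n : ℕ} (i : Fin n) : pr (emb i).rev = i := by
  have hi := i.isLt
  apply Fin.ext
  simp only [pr]
  rw [dif_neg (by simp only [Fin.val_rev, emb]; omega)]
  simp only [Fin.val_rev, emb, Fin.val_mk]; omega

lemma emb_pr_or {n : ℕ} (j : Fin (2*n)) : j = emb (pr j) ∨ j = (emb (pr j)).rev := by
  have hj := j.isLt
  by_cases h : j.val < n
  · left; apply Fin.ext; simp [pr, emb, h]
  · right; apply Fin.ext; simp [pr, emb, h, Fin.val_rev]; omega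

lemma unf_emb {α : Type*} {n : ℕ} (ψ : α → α) (g : Fin n → α) (i : Fin n) :
    unf ψ g (emb i) = g i := by
  simp [unf, emb, i.isLt]

lemma unf_rev_emb {α : Type*} {n : ℕ} (ψ : α → α) (g : Fin n → α) (i : Fin n) :
    unf ψ g (emb i).rev = ψ (g i) := by
  have hi := i.isLt
  simp only [unf]
  rw [dif_neg (by simp only [Fin.val_rev, emb]; omega)]
  congr 2
  apply Fin.ext
  simp only [Fin.val_rev, emb, Fin.val_mk]; omega

lemma unf_mem_Xpsi {α : Type*} {n : ℕ} {ψ : α → α}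
    (hψ : ∀ y, ψ (ψ y) = y) (g : Fin n → α) :
    ∀ j : Fin (2*n), unf ψ g j.rev = ψ (unf ψ g j) := by
  intro j
  rcases emb_pr_or j with h | h
  · rw [h, unf_rev_emb, unf_emb]
  · rw [h, Fin.rev_rev, unf_emb, unf_rev_emb, hψ]

lemma unf_comp {α : Type*} {n : ℕ} {ψ : α → α} {x : Fin (2*n) → α}
    (hx : ∀ j : Fin (2*n), x j.rev = ψ (x j)) :
    unf ψ (fun i => x (emb i)) = x := by
  funext j
  rcases emb_pr_or j with h | h
  · rw [h, unf_emb]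
  · rw [h, unf_rev_emb, ← hx]

end St7

theorem stmt_7 {α : Type*} [Fintype α] [DecidableEq α] (n : ℕ) (hn : 1 ≤ n)
    (hcard : Fintype.card α = 2 * n) (ψ : α → α) (hψ : ∀ y, ψ (ψ y) = y)
    (k : ℕ) (I I' : Finset (Fin (2 * n))) (hdisj : Disjoint I I')
    (hIk : I.card = k) (hI'k : I'.card = k)
    (hmir : ∀ j ∈ I ∪ I', j.rev ∉ I ∪ I')
    (y y' : α) (hy : ψ y ≠ y) (hy' : ψ y' ≠ y') (hne : y' ≠ y) (hne2 : y' ≠ ψ y) :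
    ((Xpsi α (2 * n) ψ).filter fun x =>
        (Finset.univ.filter fun j => x j = y) = I ∧
          (Finset.univ.filter fun j => x j = y') = I').card
      = (2 * n - 4) ^ (n - 2 * k) := by
  classical
  have hψinj : Function.Injective ψ := fun a b h => by rw [← hψ a, h, hψ b]
  have d1 : y ≠ ψ y := fun h => hy h.symm
  have d2 : y ≠ y' := fun h => hne h.symm
  have d3 : y ≠ ψ y' := fun h => hne2 (by rw [h, hψ])
  have d4 : ψ y ≠ y' := fun h => hne2 h.symm
  have d5 : ψ y ≠ ψ y' := fun h => d2 (hψinj h)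
  have d6 : y' ≠ ψ y' := fun h => hy' h.symm
  set S : Fin n → Finset α := fun i =>
    if St7.emb i ∈ I then {y}
    else if (St7.emb i).rev ∈ I then {ψ y}
    else if St7.emb i ∈ I' then {y'}
    else if (St7.emb i).rev ∈ I' then {ψ y'}
    else Finset.univ \ {y, ψ y, y', ψ y'} with hS
  clear_value S
  -- the four-element set has card 4
  have hcard4 : (Finset.univ \ ({y, ψ y, y', ψ y'} : Finset α)).card = 2 * n - 4 := by
    have h4 : ({y, ψ y, y', ψ y'} : Finset α).card = 4 := by
      rw [card_insert_of_notMem (by simp [d1, d2, d3]),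
        card_insert_of_notMem (by simp [d4, d5]),
        card_insert_of_notMem (by simp [d6]), card_singleton]
    rw [card_sdiff_of_subset (subset_univ _), card_univ, hcard, h4]
  -- main bijection
  have key : ((Xpsi α (2 * n) ψ).filter fun x =>
        (Finset.univ.filter fun j => x j = y) = I ∧
          (Finset.univ.filter fun j => x j = y') = I').card
      = (Fintype.piFinset S).card := by
    apply Finset.card_nbij' (fun x i => x (St7.emb i)) (fun g => St7.unf ψ g)
    · -- forward maps into piFinset
      intro x hx
      rw [Finset.mem_coe, Finset.mem_filter] at hx
      have hx1 := (Finset.mem_filter.1 hx.1).2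
      have hxI := hx.2.1
      have hxI' := hx.2.2
      have hxy : ∀ j, x j = y ↔ j ∈ I := fun j => by rw [← hxI]; simp
      have hxy' : ∀ j, x j = y' ↔ j ∈ I' := fun j => by rw [← hxI']; simp
      rw [Finset.mem_coe, Fintype.mem_piFinset]
      intro i
      simp only [hS]
      split_ifs with h1 h2 h3 h4
      · simpa using (hxy _).2 h1
      · have h := hx1 (St7.emb i)
        rw [(hxy _).2 h2] at h
        simp only [Finset.mem_singleton]
        exact hψinj (by rw [hψ, h])
      · simpa using (hxy' _).2 h3
      · have h := hx1 (St7.emb i)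
        rw [(hxy' _).2 h4] at h
        simp only [Finset.mem_singleton]
        exact hψinj (by rw [hψ, h])
      · simp only [Finset.mem_sdiff, Finset.mem_univ, true_and, Finset.mem_insert,
          Finset.mem_singleton, not_or]
        refine ⟨fun h => h1 ((hxy _).1 h), fun h => ?_, fun h => h3 ((hxy' _).1 h), fun h => ?_⟩
        · exact h2 ((hxy _).1 (by rw [hx1 (St7.emb i), h, hψ]))
        · exact h4 ((hxy' _).1 (by rw [hx1 (St7.emb i), h, hψ]))
    · -- backward maps into the filtered set
      intro g hg
      rw [Finset.mem_coe, Fintype.mem_piFinset] at hg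
      have hgS : ∀ i, g i ∈ S i := hg
      rw [Finset.mem_coe, Finset.mem_filter]
      refine ⟨Finset.mem_filter.2 ⟨Finset.mem_univ _, St7.unf_mem_Xpsi hψ g⟩, ?_, ?_⟩
      · ext j
        simp only [Finset.mem_filter, Finset.mem_univ, true_and]
        rcases St7.emb_pr_or j with h | h
        · rw [h, St7.unf_emb]
          have hg := hgS (St7.pr j)
          simp only [hS] at hg
          split_ifs at hg with h1 h2 h3 h4 <;>
            simp only [Finset.mem_singleton, Finset.mem_sdiff, Finset.mem_univ, true_and,
              Finset.mem_insert, not_or] at hg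
          · rw [hg]; simp [h1]
          · rw [hg]; simp [hy, h1]
          · rw [hg]; simp [hne, h1]
          · rw [hg]; simp [Ne.symm d3, h1]
          · simp [hg.1, h1]
        · rw [h, St7.unf_rev_emb]
          have hg := hgS (St7.pr j)
          simp only [hS] at hg
          split_ifs at hg with h1 h2 h3 h4 <;>
            simp only [Finset.mem_singleton, Finset.mem_sdiff, Finset.mem_univ, true_and,
              Finset.mem_insert, not_or] at hg
          · have : (St7.emb (St7.pr j)).rev ∉ I :=
              fun hh => hmir _ (Finset.mem_union_left _ h1) (Finset.mem_union_left _ hh)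
            rw [hg]; simp [hy, this]
          · rw [hg, hψ]; simp [h2]
          · have : (St7.emb (St7.pr j)).rev ∉ I :=
              fun hh => hmir _ (Finset.mem_union_right _ h3) (Finset.mem_union_left _ hh)
            rw [hg]; simp [Ne.symm d3, this]
          · have : (St7.emb (St7.pr j)).rev ∉ I :=
              fun hh => (Finset.disjoint_right.1 hdisj h4) hh
            rw [hg, hψ]; simp [hne, this]
          · have : ψ (g (St7.pr j)) ≠ y := fun hh => hg.2.1 (by rw [← hψ (g _), hh])
            simp [this, h2]
      · ext j
        simp only [Finset.mem_filter, Finset.mem_univ, true_and]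
        rcases St7.emb_pr_or j with h | h
        · rw [h, St7.unf_emb]
          have hg := hgS (St7.pr j)
          simp only [hS] at hg
          split_ifs at hg with h1 h2 h3 h4 <;>
            simp only [Finset.mem_singleton, Finset.mem_sdiff, Finset.mem_univ, true_and,
              Finset.mem_insert, not_or] at hg
          · have : St7.emb (St7.pr j) ∉ I' := Finset.disjoint_left.1 hdisj h1
            rw [hg]; simp [d2, this]
          · have : St7.emb (St7.pr j) ∉ I' := fun hh =>
              hmir _ (Finset.mem_union_right _ hh) (Finset.mem_union_left _ h2)
            rw [hg]; simp [d4, this]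
          · rw [hg]; simp [h3]
          · rw [hg]; simp [hy', h3]
          · simp [hg.2.2.1, h3]
        · rw [h, St7.unf_rev_emb]
          have hg := hgS (St7.pr j)
          simp only [hS] at hg
          split_ifs at hg with h1 h2 h3 h4 <;>
            simp only [Finset.mem_singleton, Finset.mem_sdiff, Finset.mem_univ, true_and,
              Finset.mem_insert, not_or] at hg
          · have : (St7.emb (St7.pr j)).rev ∉ I' :=
              fun hh => hmir _ (Finset.mem_union_left _ h1) (Finset.mem_union_right _ hh)
            rw [hg]; simp [d4, this]
          · have : (St7.emb (St7.pr j)).rev ∉ I' :=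
              fun hh => (Finset.disjoint_left.1 hdisj h2) hh
            rw [hg, hψ]; simp [d2, this]
          · have : (St7.emb (St7.pr j)).rev ∉ I' :=
              fun hh => hmir _ (Finset.mem_union_right _ h3) (Finset.mem_union_right _ hh)
            rw [hg]; simp [hy', this]
          · rw [hg, hψ]; simp [h4]
          · have : ψ (g (St7.pr j)) ≠ y' := fun hh => hg.2.2.2 (by rw [← hψ (g _), hh])
            simp [this, h4]
    · -- left inverse
      intro x hx
      have hx1 : ∀ j : Fin (2*n), x j.rev = ψ (x j) :=
        (Finset.mem_filter.1 (Finset.mem_filter.1 hx).1).2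
      exact St7.unf_comp hx1
    · -- right inverse
      intro g hg
      funext i
      exact St7.unf_emb ψ g i
  rw [key, Fintype.card_piFinset]
  -- compute the product
  set P : Fin n → Prop := fun i =>
    St7.emb i ∈ I ∨ (St7.emb i).rev ∈ I ∨ St7.emb i ∈ I' ∨ (St7.emb i).rev ∈ I' with hP
  clear_value P
  have hprod : ∀ i, (S i).card = if P i then 1 else 2 * n - 4 := by
    intro i
    by_cases h1 : St7.emb i ∈ I <;> by_cases h2 : (St7.emb i).rev ∈ I <;>
      by_cases h3 : St7.emb i ∈ I' <;> by_cases h4 : (St7.emb i).rev ∈ I' <;>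
      simp [hS, hP, h1, h2, h3, h4, hcard4]
  have hPcard : (Finset.univ.filter P).card = 2 * k := by
    have hIU : (I ∪ I').card = 2 * k := by
      rw [Finset.card_union_of_disjoint hdisj, hIk, hI'k]; ring
    rw [← hIU]
    refine (Finset.card_nbij St7.pr ?_ ?_ ?_).symm
    · intro j hj
      simp only [Finset.mem_coe, Finset.mem_filter, Finset.mem_univ, true_and, hP]
      rcases St7.emb_pr_or j with h | h
      · rw [h] at hj
        rcases Finset.mem_union.1 hj with hh | hh
        · exact Or.inl hh
        · exact Or.inr (Or.inr (Or.inl hh))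
      · rw [h] at hj
        rcases Finset.mem_union.1 hj with hh | hh
        · exact Or.inr (Or.inl hh)
        · exact Or.inr (Or.inr (Or.inr hh))
    · intro j1 hj1 j2 hj2 heq
      simp only [Finset.coe_union, Set.mem_union, Finset.mem_coe] at hj1 hj2
      have hj1' : j1 ∈ I ∪ I' := Finset.mem_union.2 hj1
      have hj2' : j2 ∈ I ∪ I' := Finset.mem_union.2 hj2
      rcases St7.emb_pr_or j1 with h1 | h1 <;> rcases St7.emb_pr_or j2 with h2 | h2
      · rw [h1, h2, heq]
      · exfalso
        apply hmir j1 hj1'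
        have hh : j1.rev = j2 := by rw [h1, heq]; exact h2.symm
        rw [hh]; exact hj2'
      · exfalso
        apply hmir j2 hj2'
        have hh : j2.rev = j1 := by rw [h2, ← heq]; exact h1.symm
        rw [hh]; exact hj1'
      · rw [h1, h2, heq]
    · intro i hi
      simp only [Finset.coe_filter, Set.mem_setOf_eq, Finset.mem_univ, true_and, hP] at hi
      rcases hi with h | h | h | h
      · exact ⟨St7.emb i, by simpa using Finset.mem_union_left _ h, St7.pr_emb i⟩
      · exact ⟨(St7.emb i).rev, by simpa using Finset.mem_union_left _ h, St7.pr_rev_emb i⟩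
      · exact ⟨St7.emb i, by simpa using Finset.mem_union_right _ h, St7.pr_emb i⟩
      · exact ⟨(St7.emb i).rev, by simpa using Finset.mem_union_right _ h, St7.pr_rev_emb i⟩
  have hsplit := Finset.card_filter_add_card_filter_not (s := Finset.univ) (p := P)
  rw [Finset.card_univ, Fintype.card_fin] at hsplit
  calc (∏ i, (S i).card) = ∏ i, (if P i then 1 else 2 * n - 4) :=
        Finset.prod_congr rfl fun i _ => hprod i
    _ = (2 * n - 4) ^ (Finset.univ.filter fun i => ¬ P i).card := by
        simp only [Finset.prod_ite, Finset.prod_const, one_pow, one_mul]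
    _ = (2 * n - 4) ^ (n - 2 * k) := by
        congr 1
        rw [hPcard] at hsplit
        exact Nat.eq_sub_of_add_eq' hsplit
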